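/- The map ρ on [0,1) defined by ρ(t) = (2t-1)/(t-1) mod 1 for t ∈ [0,1/2) and ρ(t) = (1-t)/t mod 1 for t ∈ [1/2,1) sends the mediant (p+r)/(q+s) of any pair of Farey neighbors 0 ≤ p/q < r/s ≤ 1 (other than the pair 0/1, 1/1) to a rational number with strictly smaller denominator. -/

import Mathlib

/-- The map `ρ` on `[0,1)`: `ρ(t) = (2t-1)/(t-1) (mod 1)` for `t ∈ [0,1/2)`,
and `ρ(t) = (1-t)/t (mod 1)` for `t ∈ [1/2,1)`. -/
def rhoMap (t : ℚ) : ℚ :=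
  if t < 1 / 2 then Int.fract ((2 * t - 1) / (t - 1)) else Int.fract ((1 - t) / t)

lemma fract_den_dvd (x : ℚ) : (Int.fract x).den ∣ x.den := by
  have h : Int.fract x = x + (-⌊x⌋ : ℤ) := by
    simp [Int.fract, sub_eq_add_neg]
  rw [h]
  simpa using Rat.add_den_dvd x ((-⌊x⌋ : ℤ) : ℚ)

lemma den_div_dvd (a b : ℤ) : (((a : ℚ) / b).den : ℤ) ∣ b := by
  rw [← Rat.divInt_eq_div]; exact Rat.den_dvd a b

/-- The map `ρ` sends the mediant `(p+r)/(q+s)` of any pair of Farey neighbors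
`0 ≤ p/q < r/s ≤ 1` (other than the pair `0/1, 1/1`) to a rational number with
strictly smaller denominator. -/
theorem rhoMap_mediant_denominator_lt (p q r s : ℤ)
    (hq : 0 < q) (hs : 0 < s)
    (hpq : Int.gcd p q = 1) (hrs : Int.gcd r s = 1)
    (hdet : q * r - p * s = 1)
    (h0 : 0 ≤ (p : ℚ) / q) (h1 : (r : ℚ) / s ≤ 1)
    (hne : ¬((p : ℚ) / q = 0 ∧ (r : ℚ) / s = 1)) :
    ((rhoMap (((p : ℚ) + r) / ((q : ℚ) + s))).den : ℤ) < q + s := by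
  have hqQ : (0:ℚ) < q := by exact_mod_cast hq
  have hsQ : (0:ℚ) < s := by exact_mod_cast hs
  -- p ≥ 0
  have hp : 0 ≤ p := by
    have := (div_nonneg_iff.mp h0)
    rcases this with ⟨h, _⟩ | ⟨_, h⟩
    · exact_mod_cast h
    · exact absurd h (not_le.mpr hqQ)
  -- r ≥ 1
  have hr : 1 ≤ r := by
    nlinarith [hdet, hp, hs, hq]
  -- r ≤ s
  have hrle : r ≤ s := by
    have := (div_le_one hsQ).mp h1
    exact_mod_cast this
  -- p + r < q + s
  have hlt : p + r < q + s := by nlinarith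
  have hApos : 0 < p + r := by linarith
  have hBpos : 0 < q + s := by linarith
  have hBQ : (0:ℚ) < (q:ℚ) + s := by push_cast; exact_mod_cast hBpos
  set m : ℚ := ((p : ℚ) + r) / ((q : ℚ) + s) with hm
  have hmlt1 : m < 1 := by
    rw [hm, div_lt_one hBQ]; push_cast; exact_mod_cast hlt
  unfold rhoMap
  by_cases hc : m < 1/2
  · rw [if_pos hc]
    have key : (2 * m - 1) / (m - 1) = ((2*(p+r) - (q+s) : ℤ) : ℚ) / (((p+r) - (q+s) : ℤ) : ℚ) := by
      rw [hm]
      field_simp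
      push_cast; ring
    rw [key]
    have hdvd : ((Int.fract (((2*(p+r) - (q+s) : ℤ) : ℚ) / (((p+r) - (q+s) : ℤ) : ℚ))).den : ℤ) ∣ ((p+r) - (q+s)) := by
      have h1 := fract_den_dvd (((2*(p+r) - (q+s) : ℤ) : ℚ) / (((p+r) - (q+s) : ℤ) : ℚ))
      have h2 := den_div_dvd (2*(p+r) - (q+s)) ((p+r) - (q+s))
      exact dvd_trans (Int.natCast_dvd_natCast.mpr h1) h2
    have hle := Int.le_of_dvd (by linarith) (dvd_neg.mpr hdvd)
    linarith
  · rw [if_neg hc]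
    have key : (1 - m) / m = (((q+s) - (p+r) : ℤ) : ℚ) / (((p+r) : ℤ) : ℚ) := by
      rw [hm]
      have hAne : ((p:ℚ) + r) ≠ 0 := by
        push_cast; exact_mod_cast (ne_of_gt (by exact_mod_cast hApos : (0:ℚ) < (p:ℚ)+r))
      field_simp
      push_cast; ring
    rw [key]
    have hdvd : ((Int.fract ((((q+s) - (p+r) : ℤ) : ℚ) / (((p+r) : ℤ) : ℚ))).den : ℤ) ∣ (p+r) := by
      have h1 := fract_den_dvd ((((q+s) - (p+r) : ℤ) : ℚ) / (((p+r) : ℤ) : ℚ))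
      have h2 := den_div_dvd ((q+s) - (p+r)) (p+r)
      exact dvd_trans (Int.natCast_dvd_natCast.mpr h1) h2
    have hle := Int.le_of_dvd hApos hdvd
    linarith
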